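/- If a term t is stuck in λS, then for any evaluation context F, the term F[t] is a normal form exactly when F is a pure context (contains no reset surrounding the hole); in particular, if F = F'[⟨E⟩] then F[t] is not a normal form. -/
import Mathlib


/-- Terms of the calculus λS: variables, abstractions, applications,
    shift (Sk.t) and reset (⟨t⟩). -/
inductive Tm : Type
  | var : ℕ → Tm
  | lam : ℕ → Tm → Tm
  | app : Tm → Tm → Tm
  | shift : ℕ → Tm → Tm
  | reset : Tm → Tm
deriving DecidableEq

namespace Tm

/-- Values are λ-abstractions. -/
def IsValue : Tm → Prop
  | lam _ _ => True
  | _ => False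

/-- Free variables. -/
def fv : Tm → Finset ℕ
  | var x => {x}
  | lam x t => fv t \ {x}
  | app a b => fv a ∪ fv b
  | shift k t => fv t \ {k}
  | reset t => fv t

def Closed (t : Tm) : Prop := fv t = ∅

/-- Substitution t{v/x} (substituted terms are closed values, so no
    capture can occur). -/
def subst : Tm → ℕ → Tm → Tm
  | var y, x, v => if y = x then v else var y
  | lam y t, x, v => if y = x then lam y t else lam y (subst t x v)
  | app a b, x, v => app (subst a x v) (subst b x v)
  | shift k t, x, v => if k = x then shift k t else shift k (subst t x v)
  | reset t, x, v => reset (subst t x v)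

end Tm

/-- (Evaluation) contexts F ::= [] | v F | F t | ⟨F⟩, represented outside-in.
    Pure contexts E are those with no reset constructor. -/
inductive Ctx : Type
  | hole : Ctx
  | appR : Tm → Ctx → Ctx   -- v F
  | appL : Ctx → Tm → Ctx   -- F t
  | reset : Ctx → Ctx       -- ⟨F⟩
deriving DecidableEq

namespace Ctx

def plug : Ctx → Tm → Tm
  | hole, t => t
  | appR v F, t => Tm.app v (F.plug t)
  | appL F u, t => Tm.app (F.plug t) u
  | reset F, t => Tm.reset (F.plug t)

/-- Well-formedness: in `v F` the term v must be a value. -/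
def Wf : Ctx → Prop
  | hole => True
  | appR v F => v.IsValue ∧ F.Wf
  | appL F _ => F.Wf
  | reset F => F.Wf

/-- Pure contexts contain no reset around the hole. -/
def Pure : Ctx → Prop
  | hole => True
  | appR _ F => F.Pure
  | appL F _ => F.Pure
  | reset _ => False

def fv : Ctx → Finset ℕ
  | hole => ∅
  | appR v F => v.fv ∪ F.fv
  | appL F u => F.fv ∪ u.fv
  | reset F => F.fv

/-- Context composition: (F.comp G)[t] = F[G[t]]. -/
def comp : Ctx → Ctx → Ctx
  | hole, G => G
  | appR v F, G => appR v (F.comp G)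
  | appL F u, G => appL (F.comp G) u
  | reset F, G => reset (F.comp G)

end Ctx

/-- A canonical fresh variable not occurring in the finite set s. -/
def fresh (s : Finset ℕ) : ℕ := s.sup id + 1

/-- The reduction relation →v of λS. -/
inductive Red : Tm → Tm → Prop
  | beta (F : Ctx) (x : ℕ) (t v : Tm) :
      F.Wf → v.IsValue →
      Red (F.plug (Tm.app (Tm.lam x t) v)) (F.plug (t.subst x v))
  | shift (F E : Ctx) (k : ℕ) (t : Tm) :
      F.Wf → E.Wf → E.Pure →
      Red (F.plug (Tm.reset (E.plug (Tm.shift k t))))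
          (F.plug (Tm.reset (t.subst k
            (Tm.lam (fresh E.fv) (Tm.reset (E.plug (Tm.var (fresh E.fv))))))))
  | reset (F : Ctx) (v : Tm) :
      F.Wf → v.IsValue →
      Red (F.plug (Tm.reset v)) (F.plug v)

/-- A term is stuck if it is not a value and admits no reduction step. -/
def Stuck (t : Tm) : Prop := ¬ t.IsValue ∧ ∀ t', ¬ Red t t'

/-- A normal form is a value or a stuck term. -/
def NormalForm (t : Tm) : Prop := t.IsValue ∨ Stuck t

/-- Reflexive-transitive closure of reduction. -/
def Steps : Tm → Tm → Prop := Relation.ReflTransGen Red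

/-- Evaluation: t ⇓ t' when t →v* t' and t' is irreducible. -/
def Evals (t t' : Tm) : Prop := Steps t t' ∧ ∀ u, ¬ Red t' u

/-- Redexes: (λx.t) v, ⟨E[Sk.t]⟩ with E pure, and ⟨v⟩. -/
def IsRedex (r : Tm) : Prop :=
  (∃ x t v, Tm.IsValue v ∧ r = Tm.app (Tm.lam x t) v) ∨
  (∃ E : Ctx, ∃ k t, E.Wf ∧ E.Pure ∧ r = Tm.reset (E.plug (Tm.shift k t))) ∨
  (∃ v, Tm.IsValue v ∧ r = Tm.reset v)

/-- Divergence: an infinite reduction sequence. -/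
def Diverges (t : Tm) : Prop := ∃ f : ℕ → Tm, f 0 = t ∧ ∀ n, Red (f n) (f (n + 1))

/-- Ω = (λx.x x)(λx.x x). -/
def Omega : Tm :=
  Tm.app (Tm.lam 0 (Tm.app (Tm.var 0) (Tm.var 0)))
         (Tm.lam 0 (Tm.app (Tm.var 0) (Tm.var 0)))

/-- Arbitrary one-hole contexts C. -/
inductive GCtx : Type
  | hole : GCtx
  | lam : ℕ → GCtx → GCtx
  | appL : GCtx → Tm → GCtx
  | appR : Tm → GCtx → GCtx
  | shift : ℕ → GCtx → GCtx
  | reset : GCtx → GCtx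

def GCtx.plug : GCtx → Tm → Tm
  | hole, t => t
  | lam x C, t => Tm.lam x (C.plug t)
  | appL C u, t => Tm.app (C.plug t) u
  | appR u C, t => Tm.app u (C.plug t)
  | shift k C, t => Tm.shift k (C.plug t)
  | reset C, t => Tm.reset (C.plug t)

/-- Contextual equivalence for the relaxed semantics. -/
def CtxEquiv (t0 t1 : Tm) : Prop :=
  ∀ C : GCtx, (C.plug t0).Closed → (C.plug t1).Closed →
    ((∃ v, v.IsValue ∧ Evals (C.plug t0) v) ↔ (∃ v, v.IsValue ∧ Evals (C.plug t1) v)) ∧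
    ((∃ s, Stuck s ∧ Evals (C.plug t0) s) ↔ (∃ s, Stuck s ∧ Evals (C.plug t1) s))

/-- Contextual equivalence for the original (top-level reset) semantics. -/
def CtxEquivP (t0 t1 : Tm) : Prop :=
  ∀ C : GCtx, (Tm.reset (C.plug t0)).Closed → (Tm.reset (C.plug t1)).Closed →
    ((∃ v, v.IsValue ∧ Evals (Tm.reset (C.plug t0)) v) ↔
     (∃ v, v.IsValue ∧ Evals (Tm.reset (C.plug t1)) v))

/-- The term-generating closure of a relation R on closed terms. -/
inductive TmClo (R : Tm → Tm → Prop) : Tm → Tm → Prop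
  | base {t t'} : R t t' → TmClo R t t'
  | var (x : ℕ) : TmClo R (Tm.var x) (Tm.var x)
  | lam {t t'} (x : ℕ) : TmClo R t t' → TmClo R (Tm.lam x t) (Tm.lam x t')
  | app {a a' b b'} : TmClo R a a' → TmClo R b b' →
      TmClo R (Tm.app a b) (Tm.app a' b')
  | shift {t t'} (k : ℕ) : TmClo R t t' → TmClo R (Tm.shift k t) (Tm.shift k t')
  | reset {t t'} : TmClo R t t' → TmClo R (Tm.reset t) (Tm.reset t')
namespace Ctx

lemma plug_comp (F G : Ctx) (u : Tm) : (F.comp G).plug u = F.plug (G.plug u) := by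
  induction F <;> simp [comp, plug, *]

lemma comp_wf {F G : Ctx} (hF : F.Wf) (hG : G.Wf) : (F.comp G).Wf := by
  induction F <;> simp_all [comp, Wf]

lemma comp_pure {F G : Ctx} (hF : F.Pure) (hG : G.Pure) : (F.comp G).Pure := by
  induction F <;> simp_all [comp, Pure]

end Ctx

lemma red_lift {s s' : Tm} (h : Red s s') (G : Ctx) (hG : G.Wf) :
    Red (G.plug s) (G.plug s') := by
  cases h with
  | beta F x t v hF hv =>
      rw [← Ctx.plug_comp, ← Ctx.plug_comp]
      exact Red.beta _ x t v (Ctx.comp_wf hG hF) hv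
  | shift F E k t hF hE hEp =>
      rw [← Ctx.plug_comp, ← Ctx.plug_comp]
      exact Red.shift _ E k t (Ctx.comp_wf hG hF) hE hEp
  | reset F v hF hv =>
      rw [← Ctx.plug_comp, ← Ctx.plug_comp]
      exact Red.reset _ v (Ctx.comp_wf hG hF) hv

lemma pure_plug_shift_not_value {P : Ctx} (hP : P.Pure) (k : ℕ) (t0 : Tm) :
    ¬ (P.plug (Tm.shift k t0)).IsValue := by
  cases P <;> simp [Ctx.plug, Ctx.Pure, Tm.IsValue] at *

lemma not_value_plug {u : Tm} (hu : ¬ u.IsValue) (F : Ctx) :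
    ¬ (F.plug u).IsValue := by
  cases F <;> simp [Ctx.plug, Tm.IsValue] at *
  exact hu

lemma value_eq_lam {v : Tm} (hv : v.IsValue) : ∃ x s, v = Tm.lam x s := by
  cases v <;> simp [Tm.IsValue] at hv ⊢

/-- Shapes of redexes relevant to the no-reduction argument. -/
def RedexShape (r : Tm) : Prop :=
  (∃ x s v, Tm.IsValue v ∧ r = Tm.app (Tm.lam x s) v) ∨ (∃ s, r = Tm.reset s)

lemma plug_redexshape_ne_lam {G : Ctx} {r : Tm} (hr : RedexShape r)
    (x : ℕ) (s : Tm) : G.plug r ≠ Tm.lam x s := by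
  cases G <;> simp [Ctx.plug]
  rcases hr with ⟨x', s', v, hv, rfl⟩ | ⟨s', rfl⟩ <;> simp

lemma plug_redex_ne_pure_shift {k : ℕ} {t0 : Tm} :
    ∀ (P : Ctx), P.Pure → P.Wf → ∀ (G : Ctx), G.Wf → ∀ r, RedexShape r →
      G.plug r ≠ P.plug (Tm.shift k t0) := by
  intro P
  induction P with
  | hole =>
      intro _ _ G hG r hr
      cases G with
      | hole =>
          rcases hr with ⟨x', s', v, hv, rfl⟩ | ⟨s', rfl⟩ <;> simp [Ctx.plug]
      | appR w G' => simp [Ctx.plug]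
      | appL G' u => simp [Ctx.plug]
      | reset G' => simp [Ctx.plug]
  | appR v P' ih =>
      intro hP hPw G hG r hr
      cases G with
      | hole =>
          rcases hr with ⟨x', s', w, hw, rfl⟩ | ⟨s', rfl⟩
          · simp only [Ctx.plug, Tm.app.injEq, ne_eq, not_and]
            intro _ h
            rw [h] at hw
            exact pure_plug_shift_not_value (P := P') hP k t0 hw
          · simp [Ctx.plug]
      | appR w G' =>
          simp only [Ctx.plug, ne_eq, Tm.app.injEq, not_and]
          intro _ h
          exact ih hP hPw.2 G' hG.2 r hr h
      | appL G' u =>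
          simp only [Ctx.plug, ne_eq, Tm.app.injEq, not_and]
          intro h _
          obtain ⟨x, s, rfl⟩ := value_eq_lam hPw.1
          exact plug_redexshape_ne_lam hr x s h
      | reset G' => simp [Ctx.plug]
  | appL P' u ih =>
      intro hP hPw G hG r hr
      cases G with
      | hole =>
          rcases hr with ⟨x', s', w, hw, rfl⟩ | ⟨s', rfl⟩
          · simp only [Ctx.plug, ne_eq, Tm.app.injEq, not_and]
            intro h _
            exact pure_plug_shift_not_value (P := P') hP k t0 (by rw [← h]; trivial)
          · simp [Ctx.plug]
      | appR w G' =>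
          simp only [Ctx.plug, ne_eq, Tm.app.injEq, not_and]
          intro h _
          have := hG.1
          rw [h] at this
          exact pure_plug_shift_not_value (P := P') hP k t0 this
      | appL G' u' =>
          simp only [Ctx.plug, ne_eq, Tm.app.injEq, not_and]
          intro h _
          exact ih hP hPw G' hG r hr h
      | reset G' => simp [Ctx.plug]
  | reset P' ih => intro hP; exact absurd hP (by simp [Ctx.Pure])

lemma pure_shift_no_red {k : ℕ} {t0 : Tm} {P : Ctx} (hP : P.Pure) (hPw : P.Wf)
    {u : Tm} : ¬ Red (P.plug (Tm.shift k t0)) u := by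
  generalize hEq : P.plug (Tm.shift k t0) = w
  intro h
  cases h with
  | beta F x s v hF hv =>
      exact plug_redex_ne_pure_shift P hP hPw F hF _
        (Or.inl ⟨x, s, v, hv, rfl⟩) hEq.symm
  | shift F E k' t' hF hE hEp =>
      exact plug_redex_ne_pure_shift P hP hPw F hF _
        (Or.inr ⟨_, rfl⟩) hEq.symm
  | reset F v hF hv =>
      exact plug_redex_ne_pure_shift P hP hPw F hF _
        (Or.inr ⟨_, rfl⟩) hEq.symm

lemma stuck_decomp : ∀ t : Tm, t.Closed → Stuck t →
    ∃ (E : Ctx) (k : ℕ) (t0 : Tm), E.Wf ∧ E.Pure ∧ t = E.plug (Tm.shift k t0) := by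
  intro t
  induction t with
  | var x => intro hc; exact absurd hc (by simp [Tm.Closed, Tm.fv])
  | lam x s _ => intro _ hs; exact absurd trivial hs.1
  | app a b ih_a ih_b =>
      intro hc hs
      have hca : a.Closed := by
        simp only [Tm.Closed, Tm.fv, Finset.union_eq_empty] at hc; exact hc.1
      have hcb : b.Closed := by
        simp only [Tm.Closed, Tm.fv, Finset.union_eq_empty] at hc; exact hc.2
      by_cases hva : a.IsValue
      · by_cases hvb : b.IsValue
        · exfalso
          obtain ⟨x, s, rfl⟩ := value_eq_lam hva
          exact hs.2 _ (Red.beta Ctx.hole x s b trivial hvb)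
        · have hsb : Stuck b :=
            ⟨hvb, fun b' hb =>
              hs.2 _ (red_lift hb (Ctx.appR a Ctx.hole) ⟨hva, trivial⟩)⟩
          obtain ⟨E, k, t0, hEw, hEp, rfl⟩ := ih_b hcb hsb
          exact ⟨Ctx.appR a E, k, t0, ⟨hva, hEw⟩, hEp, rfl⟩
      · have hsa : Stuck a :=
          ⟨hva, fun a' ha =>
            hs.2 _ (red_lift ha (Ctx.appL Ctx.hole b) trivial)⟩
        obtain ⟨E, k, t0, hEw, hEp, rfl⟩ := ih_a hca hsa
        exact ⟨Ctx.appL E b, k, t0, hEw, hEp, rfl⟩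
  | shift k s _ => intro _ _; exact ⟨Ctx.hole, k, s, trivial, trivial, rfl⟩
  | reset s ih =>
      intro hc hs
      exfalso
      by_cases hv : s.IsValue
      · exact hs.2 _ (Red.reset Ctx.hole s trivial hv)
      · have hss : Stuck s :=
          ⟨hv, fun s' h => hs.2 _ (red_lift h (Ctx.reset Ctx.hole) trivial)⟩
        obtain ⟨E, k, t0, hEw, hEp, rfl⟩ := ih hc hss
        exact hs.2 _ (Red.shift Ctx.hole E k t0 trivial hEw hEp)

lemma nonpure_decomp : ∀ F : Ctx, F.Wf → ¬ F.Pure →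
    ∃ (F' E : Ctx), F'.Wf ∧ E.Wf ∧ E.Pure ∧ F = F'.comp (Ctx.reset E) := by
  intro F
  induction F with
  | hole => intro _ h; exact absurd trivial h
  | appR v F ih =>
      intro hw hp
      obtain ⟨F', E, h1, h2, h3, rfl⟩ := ih hw.2 hp
      exact ⟨Ctx.appR v F', E, ⟨hw.1, h1⟩, h2, h3, rfl⟩
  | appL F u ih =>
      intro hw hp
      obtain ⟨F', E, h1, h2, h3, rfl⟩ := ih hw hp
      exact ⟨Ctx.appL F' u, E, h1, h2, h3, rfl⟩
  | reset F ih =>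
      intro hw _
      by_cases hp : F.Pure
      · exact ⟨Ctx.hole, F, trivial, hw, hp, rfl⟩
      · obtain ⟨F', E, h1, h2, h3, rfl⟩ := ih hw hp
        exact ⟨Ctx.reset F', E, h1, h2, h3, rfl⟩

/-- for a stuck (closed) term t, F[t] is a normal form exactly
    when F is pure; in particular F'[⟨E[t]⟩] is never a normal form. -/
theorem stuck_plug_normal_iff_pure (t : Tm) (ht : t.Closed) (hs : Stuck t) :
    (∀ F : Ctx, F.Wf → (NormalForm (F.plug t) ↔ F.Pure)) ∧
    (∀ (F' E : Ctx), F'.Wf → E.Wf → E.Pure →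
      ¬ NormalForm ((F'.comp (Ctx.reset E)).plug t)) := by
  obtain ⟨E0, k, t0, hE0w, hE0p, rfl⟩ := stuck_decomp t ht hs
  have part2 : ∀ (F' E : Ctx), F'.Wf → E.Wf → E.Pure →
      ¬ NormalForm ((F'.comp (Ctx.reset E)).plug (E0.plug (Tm.shift k t0))) := by
    intro F' E hF' hEw hEp hnf
    have heq : (F'.comp (Ctx.reset E)).plug (E0.plug (Tm.shift k t0)) =
        F'.plug (Tm.reset ((E.comp E0).plug (Tm.shift k t0))) := by
      rw [Ctx.plug_comp, Ctx.plug_comp]; rfl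
    have hred := Red.shift F' (E.comp E0) k t0 hF'
      (Ctx.comp_wf hEw hE0w) (Ctx.comp_pure hEp hE0p)
    rcases hnf with hv | hst
    · exact not_value_plug hs.1 _ hv
    · exact hst.2 _ (heq ▸ hred)
  refine ⟨?_, part2⟩
  intro F hF
  constructor
  · intro hnf
    by_contra hp
    obtain ⟨F', E, h1, h2, h3, rfl⟩ := nonpure_decomp F hF hp
    exact part2 F' E h1 h2 h3 hnf
  · intro hp
    refine Or.inr ⟨not_value_plug hs.1 _, fun u hu => ?_⟩
    rw [← Ctx.plug_comp] at hu
    exact pure_shift_no_red (Ctx.comp_pure hp hE0p) (Ctx.comp_wf hF hE0w) hu
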